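/- Weighted trace of the twisted transfer matrix: fix 1 ≤ m < n, assume (ξ_n/ξ_i)² ∉ {q², q⁻²} for all i < n, and let u ∈ K be nonzero with 1 + u² ≠ 0 (u plays the role of q^{κ/2}). For N ≥ 1 and Y ∈ End((K²)^{⊗N}) define the weighted trace tr^κ_N(Y) = tr( diag(u⁻¹,u)^{⊗N} · Y ) / (u + u⁻¹)^N. Then for every X ∈ End((K²)^{⊗m}) acting on sites 1,…,m: tr^κ_n( 𝐭*(ξ_n)(X ⊗ id) ) = 2·(w + u²·w⁻¹)/(1 + u²) · tr^κ_m(X). -/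

import Mathlib

noncomputable section

open Matrix

/-- Entries of the six-vertex L-matrix `L°(η)` (first pair of indices: output
(auxiliary, site) indices; second pair: input indices). -/
def sixvE {K : Type*} [Field K] (q η : K) (a b a' b' : Fin 2) : K :=
  if a = a' ∧ b = b' then (if a = b then 1 else (η - η⁻¹) / (q * η - q⁻¹ * η⁻¹))
  else if a = b' ∧ b = a' then (q - q⁻¹) / (q * η - q⁻¹ * η⁻¹) else 0

/-- The six-vertex L-matrix `L°_{a,i}(η)` acting on the auxiliary two-dimensional
space and the `i`-th site of `V = (K²)^{⊗n}` (sites indexed by `Fin n`, basis of `V`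
indexed by `Fin n → Fin 2`). -/
def Laux {K : Type*} [Field K] (n : ℕ) (q η : K) (i : Fin n) :
    Matrix (Fin 2 × (Fin n → Fin 2)) (Fin 2 × (Fin n → Fin 2)) K :=
  Matrix.of fun p r =>
    if ∀ j, j ≠ i → p.2 j = r.2 j then sixvE q η p.1 (p.2 i) r.1 (r.2 i) else 0

/-- The monodromy matrix `T_a(ζ) = L°_{a,n}(ζ/ξ_n) ⋯ L°_{a,1}(ζ/ξ₁)`. -/
def mono {K : Type*} [Field K] (n : ℕ) (q ζ : K) (ξ : Fin n → K) :
    Matrix (Fin 2 × (Fin n → Fin 2)) (Fin 2 × (Fin n → Fin 2)) K :=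
  (((List.finRange n).reverse).map (fun i => Laux n q (ζ / ξ i) i)).prod

/-- `diag(w, w⁻¹)` on the auxiliary space, tensored with `X` on `V`. -/
def auxTwist {K : Type*} [Field K] (n : ℕ) (w : K)
    (X : Matrix (Fin n → Fin 2) (Fin n → Fin 2) K) :
    Matrix (Fin 2 × (Fin n → Fin 2)) (Fin 2 × (Fin n → Fin 2)) K :=
  Matrix.of fun p r =>
    if p.1 = r.1 then (if p.1 = 0 then w else w⁻¹) * X p.2 r.2 else 0

/-- Partial trace over the auxiliary space. -/
def ptr {K : Type*} [Field K] (n : ℕ)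
    (M : Matrix (Fin 2 × (Fin n → Fin 2)) (Fin 2 × (Fin n → Fin 2)) K) :
    Matrix (Fin n → Fin 2) (Fin n → Fin 2) K :=
  Matrix.of fun s s' => ∑ ε : Fin 2, M (ε, s) (ε, s')

/-- The twisted transfer matrix
`𝐭*(ζ)(X) = Tr_a[ T_a(ζ)·(diag(w,w⁻¹)_a ⊗ X)·T_a(ζ)⁻¹ ]`. -/
def ttm {K : Type*} [Field K] (n : ℕ) (q ζ w : K) (ξ : Fin n → K)
    (X : Matrix (Fin n → Fin 2) (Fin n → Fin 2) K) :
    Matrix (Fin n → Fin 2) (Fin n → Fin 2) K :=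
  ptr n (mono n q ζ ξ * auxTwist n w X * (mono n q ζ ξ)⁻¹)

/-- `X ⊗ id`: an endomorphism of `(K²)^{⊗m}` acting on the first `m` sites of
`V = (K²)^{⊗n}`, identity on the remaining sites. -/
def embed {K : Type*} [Field K] (m n : ℕ) (h : m ≤ n)
    (X : Matrix (Fin m → Fin 2) (Fin m → Fin 2) K) :
    Matrix (Fin n → Fin 2) (Fin n → Fin 2) K :=
  Matrix.of fun s s' =>
    if ∀ j : Fin n, m ≤ (j : ℕ) → s j = s' j then
      X (fun i => s (Fin.castLE h i)) (fun i => s' (Fin.castLE h i))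
    else 0

/-- The weighted trace `tr^κ_N(Y) = tr( diag(u⁻¹,u)^{⊗N} · Y ) / (u + u⁻¹)^N`. -/
def wtr {K : Type*} [Field K] (N : ℕ) (u : K)
    (Y : Matrix (Fin N → Fin 2) (Fin N → Fin 2) K) : K :=
  Matrix.trace
      (Matrix.diagonal (fun s : Fin N → Fin 2 => ∏ i, (if s i = 0 then u⁻¹ else u)) * Y)
    / (u + u⁻¹) ^ N

namespace TTMAux

open Kronecker Finset

variable {K : Type*} [Field K]

/-- single-site weight -/
def w0 (u : K) : Fin 2 → K := fun ε => if ε = 0 then u⁻¹ else u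

/-- generic six-vertex-type 4×4 kernel -/
def kmat (b c : K) : Matrix (Fin 2 × Fin 2) (Fin 2 × Fin 2) K :=
  Matrix.of fun p r =>
    if p.1 = r.1 ∧ p.2 = r.2 then (if p.1 = p.2 then 1 else b)
    else if p.1 = r.2 ∧ p.2 = r.1 then c else 0

lemma sixvE_eq_kmat (q η : K) (a b a' b' : Fin 2) :
    sixvE q η a b a' b' =
      kmat ((η - η⁻¹) / (q * η - q⁻¹ * η⁻¹)) ((q - q⁻¹) / (q * η - q⁻¹ * η⁻¹)) (a, b) (a', b') :=
  rfl

lemma kmat_mul_eq_one {b c b' c' : K} (h1 : b * b' + c * c' = 1) (h2 : b * c' + c * b' = 0) :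
    kmat b c * kmat b' c' = (1 : Matrix (Fin 2 × Fin 2) (Fin 2 × Fin 2) K) := by
  ext ⟨a₁, a₂⟩ ⟨d₁, d₂⟩
  simp only [Matrix.mul_apply, Fintype.sum_prod_type, Fin.sum_univ_two, kmat, Matrix.of_apply,
    Matrix.one_apply, Prod.mk.injEq]
  fin_cases a₁ <;> fin_cases a₂ <;> fin_cases d₁ <;> fin_cases d₂ <;>
    simp <;> first
      | linear_combination h1
      | linear_combination h2

lemma kmat_ne_zero {b c : K} {p r : Fin 2 × Fin 2} (h : kmat b c p r ≠ 0) :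
    (p.1 = r.1 ∧ p.2 = r.2) ∨ (p.1 = r.2 ∧ p.2 = r.1) := by
  unfold kmat at h
  simp only [Matrix.of_apply] at h
  by_cases hA : p.1 = r.1 ∧ p.2 = r.2
  · exact Or.inl hA
  by_cases hB : p.1 = r.2 ∧ p.2 = r.1
  · exact Or.inr hB
  rw [if_neg hA, if_neg hB] at h
  exact absurd rfl h

section Denominators

variable {q η : K}

lemma denom_ne (hq : q ≠ 0) (hη : η ≠ 0) (h2 : η ^ 2 ≠ (q ^ 2)⁻¹) :
    q * η - q⁻¹ * η⁻¹ ≠ 0 := by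
  intro h
  apply h2
  have h' : q * η = q⁻¹ * η⁻¹ := sub_eq_zero.mp h
  have h1 : (q * η) * (q * η) = (q⁻¹ * η⁻¹) * (q * η) := by rw [← h']
  have h3 : η ^ 2 * q ^ 2 = 1 := by
    field_simp at h1
    linear_combination h1
  exact eq_inv_of_mul_eq_one_left (by linear_combination h3)

lemma factor1_ne (hq : q ≠ 0) (hη : η ≠ 0) (h1 : η ^ 2 ≠ q ^ 2) (h2 : η ^ 2 ≠ (q ^ 2)⁻¹) :
    η - η⁻¹ + (q - q⁻¹) ≠ 0 := by
  intro h
  have key : (η + q) * (q * η - 1) = (η - η⁻¹ + (q - q⁻¹)) * (q * η) := by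
    field_simp
    ring
  rw [h, zero_mul] at key
  rcases mul_eq_zero.mp key with h' | h'
  · have hη' : η = -q := eq_neg_of_add_eq_zero_left h'
    exact h1 (by rw [hη']; ring)
  · have hη' : η = q⁻¹ := eq_inv_of_mul_eq_one_left (by linear_combination h')
    exact h2 (by rw [hη', ← inv_pow])

lemma factor2_ne (hq : q ≠ 0) (hη : η ≠ 0) (h1 : η ^ 2 ≠ q ^ 2) (h2 : η ^ 2 ≠ (q ^ 2)⁻¹) :
    η - η⁻¹ - (q - q⁻¹) ≠ 0 := by
  intro h
  have key : (η - q) * (q * η + 1) = (η - η⁻¹ - (q - q⁻¹)) * (q * η) := by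
    field_simp
    ring
  rw [h, zero_mul] at key
  rcases mul_eq_zero.mp key with h' | h'
  · exact h1 (by rw [sub_eq_zero.mp h'])
  · have hη' : -η = q⁻¹ := eq_inv_of_mul_eq_one_left (by linear_combination -h')
    refine h2 ?_
    rw [← neg_sq η, hη', inv_pow]

lemma kernel_right_inv (hq : q ≠ 0) (hη : η ≠ 0)
    (h1 : η ^ 2 ≠ q ^ 2) (h2 : η ^ 2 ≠ (q ^ 2)⁻¹) :
    ∃ E' : Matrix (Fin 2 × Fin 2) (Fin 2 × Fin 2) K,
      kmat ((η - η⁻¹) / (q * η - q⁻¹ * η⁻¹)) ((q - q⁻¹) / (q * η - q⁻¹ * η⁻¹)) * E' = 1 := by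
  set den := q * η - q⁻¹ * η⁻¹ with hden
  have hden0 : den ≠ 0 := denom_ne hq hη h2
  set β := (η - η⁻¹) / den with hβ
  set γ := (q - q⁻¹) / den with hγ
  have hsum : β + γ ≠ 0 := by
    rw [hβ, hγ, ← add_div]
    exact div_ne_zero (factor1_ne hq hη h1 h2) hden0
  have hdiff : β - γ ≠ 0 := by
    rw [hβ, hγ, div_sub_div_same]
    exact div_ne_zero (factor2_ne hq hη h1 h2) hden0
  have hD : β ^ 2 - γ ^ 2 ≠ 0 := by
    rw [show β ^ 2 - γ ^ 2 = (β + γ) * (β - γ) by ring]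
    exact mul_ne_zero hsum hdiff
  refine ⟨kmat (β / (β ^ 2 - γ ^ 2)) (-γ / (β ^ 2 - γ ^ 2)), kmat_mul_eq_one ?_ ?_⟩
  · field_simp
    ring
  · field_simp
    ring

end Denominators

/-- Splitting off the auxiliary space together with site `i`. -/
def siteEquiv (n : ℕ) (i : Fin n) :
    (Fin 2 × (Fin n → Fin 2)) ≃ ((Fin 2 × Fin 2) × ({j : Fin n // j ≠ i} → Fin 2)) :=
  ((Equiv.refl (Fin 2)).prodCongr (Equiv.piSplitAt i fun _ => Fin 2)).trans
    (Equiv.prodAssoc _ _ _).symm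

lemma siteEquiv_apply (n : ℕ) (i : Fin n) (p : Fin 2 × (Fin n → Fin 2)) :
    siteEquiv n i p = ((p.1, p.2 i), fun j => p.2 j.1) := rfl

lemma laux_eq_submatrix (n : ℕ) (q η : K) (i : Fin n) :
    Laux n q η i =
      (kmat ((η - η⁻¹) / (q * η - q⁻¹ * η⁻¹)) ((q - q⁻¹) / (q * η - q⁻¹ * η⁻¹)) ⊗ₖ
          (1 : Matrix ({j : Fin n // j ≠ i} → Fin 2) ({j : Fin n // j ≠ i} → Fin 2) K)).submatrix
        (siteEquiv n i) (siteEquiv n i) := by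
  ext ⟨a, s⟩ ⟨a', s'⟩
  simp only [Laux, Matrix.of_apply, Matrix.submatrix_apply, siteEquiv_apply,
    Matrix.kroneckerMap_apply, Matrix.one_apply]
  have hcond : ((fun j : {j : Fin n // j ≠ i} => s j.1) = fun j => s' j.1) ↔
      (∀ j, j ≠ i → s j = s' j) := by
    rw [funext_iff]
    exact ⟨fun h j hj => h ⟨j, hj⟩, fun h j => h j j.2⟩
  by_cases hc : ∀ j, j ≠ i → s j = s' j
  · rw [if_pos hc, if_pos (hcond.mpr hc), mul_one]
    exact sixvE_eq_kmat q η a (s i) a' (s' i)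
  · rw [if_neg hc, if_neg (fun h => hc (hcond.mp h)), mul_zero]

lemma isUnit_Laux (n : ℕ) (q η : K) (i : Fin n) (hq : q ≠ 0) (hη : η ≠ 0)
    (h1 : η ^ 2 ≠ q ^ 2) (h2 : η ^ 2 ≠ (q ^ 2)⁻¹) : IsUnit (Laux n q η i) := by
  obtain ⟨E', hE'⟩ := kernel_right_inv (η := η) hq hη h1 h2
  apply (Matrix.isUnit_iff_isUnit_det _).mpr
  apply Matrix.isUnit_det_of_right_inverse
    (B := (E' ⊗ₖ (1 : Matrix ({j : Fin n // j ≠ i} → Fin 2) _ K)).submatrix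
      (siteEquiv n i) (siteEquiv n i))
  rw [laux_eq_submatrix n q η i, Matrix.submatrix_mul_equiv, ← Matrix.mul_kronecker_mul, hE',
    Matrix.one_mul, Matrix.one_kronecker_one, Matrix.submatrix_one_equiv]

lemma laux_ne_zero {n : ℕ} {q η : K} {i : Fin n} {p r : Fin 2 × (Fin n → Fin 2)}
    (h : Laux n q η i p r ≠ 0) :
    (∀ j, j ≠ i → p.2 j = r.2 j) ∧
      ((p.1 = r.1 ∧ p.2 i = r.2 i) ∨ (p.1 = r.2 i ∧ p.2 i = r.1)) := by
  unfold Laux at h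
  simp only [Matrix.of_apply] at h
  split_ifs at h with hc
  · refine ⟨hc, ?_⟩
    rw [sixvE_eq_kmat] at h
    exact kmat_ne_zero h
  · exact absurd rfl h

lemma diagonal_mul_comm {ι : Type*} [Fintype ι] [DecidableEq ι] (d : ι → K)
    (M : Matrix ι ι K) (h : ∀ p r, M p r ≠ 0 → d p = d r) :
    Matrix.diagonal d * M = M * Matrix.diagonal d := by
  ext p r
  rw [Matrix.diagonal_mul, Matrix.mul_diagonal]
  by_cases h0 : M p r = 0
  · simp [h0]
  · rw [h p r h0, mul_comm]

/-- The full twist (including the auxiliary space, omitting site `ℓ`) commutes with the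
six-vertex `L`-matrices at sites other than `ℓ`. -/
lemma twist_comm_Laux (N : ℕ) (u q η : K) (ℓ i : Fin N) (hiℓ : i ≠ ℓ) :
    Matrix.diagonal (fun p : Fin 2 × (Fin N → Fin 2) =>
        w0 u p.1 * ∏ j ∈ Finset.univ.erase ℓ, w0 u (p.2 j)) * Laux N q η i
      = Laux N q η i * Matrix.diagonal (fun p : Fin 2 × (Fin N → Fin 2) =>
        w0 u p.1 * ∏ j ∈ Finset.univ.erase ℓ, w0 u (p.2 j)) := by
  apply diagonal_mul_comm
  intro p r h0
  obtain ⟨hoff, hcons⟩ := laux_ne_zero h0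
  have hi : i ∈ Finset.univ.erase ℓ := Finset.mem_erase.mpr ⟨hiℓ, Finset.mem_univ i⟩
  rw [← Finset.mul_prod_erase _ (fun j => w0 u (p.2 j)) hi,
    ← Finset.mul_prod_erase _ (fun j => w0 u (r.2 j)) hi]
  have hrest : ∏ j ∈ (Finset.univ.erase ℓ).erase i, w0 u (p.2 j)
      = ∏ j ∈ (Finset.univ.erase ℓ).erase i, w0 u (r.2 j) :=
    Finset.prod_congr rfl fun j hj => by rw [hoff j (Finset.mem_erase.mp hj).1]
  rw [hrest]
  rcases hcons with ⟨h1, h2⟩ | ⟨h1, h2⟩ <;> rw [h1, h2] <;> ring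

section Perm

variable (N : ℕ)

/-- The swap of the auxiliary index and the last site index. -/
def sigmaSwap : (Fin 2 × (Fin (N + 1) → Fin 2)) → (Fin 2 × (Fin (N + 1) → Fin 2)) :=
  fun p => (p.2 (Fin.last N), Function.update p.2 (Fin.last N) p.1)

lemma sigmaSwap_invol : Function.Involutive (sigmaSwap N) := by
  intro p
  unfold sigmaSwap
  simp [Function.update_idem, Function.update_self, Function.update_eq_self]

/-- The permutation matrix exchanging the auxiliary space and the last site. -/
def Pmat : Matrix (Fin 2 × (Fin (N + 1) → Fin 2)) (Fin 2 × (Fin (N + 1) → Fin 2)) K :=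
  Matrix.of fun p r => if p = sigmaSwap N r then 1 else 0

variable {N}

lemma sixvE_one {q : K} (hq : q ≠ 0) (hq2 : q ^ 2 ≠ 1) (x y x' y' : Fin 2) :
    sixvE q 1 x y x' y' = if x = y' ∧ y = x' then 1 else 0 := by
  have hden : q - q⁻¹ ≠ 0 := by
    rw [sub_ne_zero]
    intro h
    apply hq2
    rw [sq]
    nth_rewrite 2 [h]
    rw [mul_inv_cancel₀ hq]
  unfold sixvE
  rw [inv_one, sub_self, zero_div, mul_one, mul_one, div_self hden]
  by_cases h1 : x = x' ∧ y = y'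
  · obtain ⟨rfl, rfl⟩ := h1
    rw [if_pos ⟨rfl, rfl⟩]
    by_cases hxy : x = y
    · rw [if_pos hxy, if_pos ⟨hxy, hxy.symm⟩]
    · rw [if_neg hxy, if_neg (fun h => hxy h.1)]
  · rw [if_neg h1]

lemma laux_last_eq_Pmat {q : K} (hq : q ≠ 0) (hq2 : q ^ 2 ≠ 1) :
    Laux (N + 1) q 1 (Fin.last N) = Pmat N := by
  ext ⟨a, s⟩ ⟨a', s'⟩
  simp only [Laux, Pmat, Matrix.of_apply, sixvE_one hq hq2]
  have hiff : ((a, s) = sigmaSwap N (a', s')) ↔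
      ((a = s' (Fin.last N) ∧ s (Fin.last N) = a') ∧ ∀ j, j ≠ Fin.last N → s j = s' j) := by
    unfold sigmaSwap
    rw [Prod.ext_iff]
    dsimp only
    constructor
    · rintro ⟨h1, h2⟩
      refine ⟨⟨h1, ?_⟩, fun j hj => ?_⟩
      · rw [h2, Function.update_self]
      · rw [h2, Function.update_of_ne hj]
    · rintro ⟨⟨h1, h2⟩, h3⟩
      refine ⟨h1, funext fun j => ?_⟩
      by_cases hj : j = Fin.last N
      · subst hj; rw [Function.update_self]; exact h2
      · rw [Function.update_of_ne hj]; exact h3 j hj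
  by_cases hc : ∀ j, j ≠ Fin.last N → s j = s' j
  · rw [if_pos hc]
    by_cases hd : a = s' (Fin.last N) ∧ s (Fin.last N) = a'
    · rw [if_pos hd, if_pos (hiff.mpr ⟨hd, hc⟩)]
    · rw [if_neg hd, if_neg (fun h => hd (hiff.mp h).1)]
  · rw [if_neg hc, if_neg (fun h => hc (hiff.mp h).2)]

lemma Pmat_mul (M : Matrix (Fin 2 × (Fin (N + 1) → Fin 2)) (Fin 2 × (Fin (N + 1) → Fin 2)) K) :
    (Pmat N : Matrix _ _ K) * M = Matrix.of fun p r => M (sigmaSwap N p) r := by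
  ext p r
  simp only [Matrix.mul_apply, Pmat, Matrix.of_apply]
  rw [Finset.sum_eq_single (sigmaSwap N p)]
  · rw [if_pos (sigmaSwap_invol N p).symm, one_mul]
  · intro c _ hc
    rw [if_neg, zero_mul]
    intro h
    exact hc (by rw [h, sigmaSwap_invol N])
  · intro h
    exact absurd (Finset.mem_univ _) h

lemma mul_Pmat (M : Matrix (Fin 2 × (Fin (N + 1) → Fin 2)) (Fin 2 × (Fin (N + 1) → Fin 2)) K) :
    M * (Pmat N : Matrix _ _ K) = Matrix.of fun p r => M p (sigmaSwap N r) := by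
  ext p r
  simp only [Matrix.mul_apply, Pmat, Matrix.of_apply]
  rw [Finset.sum_eq_single (sigmaSwap N r)]
  · rw [if_pos rfl, mul_one]
  · intro c _ hc
    rw [if_neg hc, mul_zero]
  · intro h
    exact absurd (Finset.mem_univ _) h

lemma Pmat_conj (M : Matrix (Fin 2 × (Fin (N + 1) → Fin 2)) (Fin 2 × (Fin (N + 1) → Fin 2)) K) :
    (Pmat N : Matrix _ _ K) * M * Pmat N
      = Matrix.of fun p r => M (sigmaSwap N p) (sigmaSwap N r) := by
  rw [Pmat_mul, mul_Pmat]
  rfl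

lemma Pmat_mul_Pmat : (Pmat N : Matrix _ _ K) * Pmat N = 1 := by
  rw [Pmat_mul]
  ext p r
  simp only [Matrix.of_apply, Pmat, Matrix.one_apply]
  congr 1
  simp only [eq_iff_iff]
  exact ⟨fun h => (sigmaSwap_invol N).injective h, fun h => by rw [h]⟩

end Perm

lemma finRange_succ_concat (n : ℕ) :
    List.finRange (n + 1) = ((List.finRange n).map Fin.castSucc).concat (Fin.last n) := by
  rw [← List.ofFn_id, List.ofFn_succ', ← List.ofFn_id (n := n), List.map_ofFn]
  rfl

lemma mono_succ (n : ℕ) (q ζ : K) (ξ : Fin (n + 1) → K) :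
    mono (n + 1) q ζ ξ = Laux (n + 1) q (ζ / ξ (Fin.last n)) (Fin.last n) *
      (((List.finRange n).reverse).map
        (fun i => Laux (n + 1) q (ζ / ξ i.castSucc) i.castSucc)).prod := by
  unfold mono
  rw [finRange_succ_concat, List.concat_eq_append, List.reverse_append, List.reverse_singleton,
    List.singleton_append, List.map_cons, List.prod_cons, List.map_reverse, List.map_map,
    List.map_reverse]
  rfl

lemma trace_diag_mul {ι : Type*} [Fintype ι] [DecidableEq ι] (d : ι → K) (M : Matrix ι ι K) :
    Matrix.trace (Matrix.diagonal d * M) = ∑ x, d x * M x x := by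
  simp [Matrix.trace, Matrix.diag, Matrix.diagonal_mul]

lemma trace_conj {ι : Type*} [Fintype ι] [DecidableEq ι] (D A T : Matrix ι ι K)
    (hT : IsUnit T) (hC : D * T = T * D) :
    Matrix.trace (D * (T * A * T⁻¹)) = Matrix.trace (D * A) := by
  have h1 : D * (T * A * T⁻¹) = T * (D * A) * T⁻¹ := by
    calc D * (T * A * T⁻¹) = (D * T) * A * T⁻¹ := by simp only [Matrix.mul_assoc]
    _ = (T * D) * A * T⁻¹ := by rw [hC]
    _ = T * (D * A) * T⁻¹ := by simp only [Matrix.mul_assoc]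
  rw [h1, Matrix.trace_mul_cycle,
    Matrix.nonsing_inv_mul _ ((Matrix.isUnit_iff_isUnit_det T).mp hT), Matrix.one_mul]

section Split

variable (m k N : ℕ) (h : m + k = N)

/-- Splitting of spin configurations into the first `m` sites and the remaining `k` sites. -/
def splitEquiv : ((Fin m → Fin 2) × (Fin k → Fin 2)) ≃ (Fin N → Fin 2) where
  toFun p j := if hj : (j : ℕ) < m then p.1 ⟨j, hj⟩ else p.2 ⟨(j : ℕ) - m, by omega⟩
  invFun s := (fun i => s ⟨i, by omega⟩, fun j => s ⟨m + (j : ℕ), by omega⟩)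
  left_inv p := by
    ext i
    · dsimp only
      rw [dif_pos i.isLt]
    · dsimp only
      rw [dif_neg (by omega)]
      congr 1
      ext
      simp
  right_inv s := by
    funext j
    dsimp only
    split_ifs with hj
    · rfl
    · congr 1
      ext
      simp
      omega

/-- The corresponding index equivalence. -/
def idxEquiv : (Fin m ⊕ Fin k) ≃ Fin N where
  toFun x := match x with
    | Sum.inl i => ⟨(i : ℕ), by omega⟩
    | Sum.inr j => ⟨m + (j : ℕ), by omega⟩
  invFun j := if hj : (j : ℕ) < m then Sum.inl ⟨j, hj⟩ else Sum.inr ⟨(j : ℕ) - m, by omega⟩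
  left_inv x := by
    rcases x with i | j
    · dsimp only
      rw [dif_pos i.isLt]
    · dsimp only
      rw [dif_neg (by omega)]
      congr 1
      ext
      simp
  right_inv j := by
    dsimp only
    split_ifs with hj
    · rfl
    · simp only [Sum.elim_inr]
      ext
      simp
      omega

lemma splitEquiv_inl (p : (Fin m → Fin 2) × (Fin k → Fin 2)) (i : Fin m) :
    splitEquiv m k N h p (idxEquiv m k N h (Sum.inl i)) = p.1 i := by
  unfold splitEquiv idxEquiv
  dsimp only [Equiv.coe_fn_mk, Sum.elim_inl]
  rw [dif_pos i.isLt]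

lemma splitEquiv_inr (p : (Fin m → Fin 2) × (Fin k → Fin 2)) (j : Fin k) :
    splitEquiv m k N h p (idxEquiv m k N h (Sum.inr j)) = p.2 j := by
  unfold splitEquiv idxEquiv
  dsimp only [Equiv.coe_fn_mk, Sum.elim_inr]
  rw [dif_neg (by omega)]
  congr 1
  ext
  simp

lemma splitEquiv_castLE (p : (Fin m → Fin 2) × (Fin k → Fin 2)) (hmN : m ≤ N) (i : Fin m) :
    splitEquiv m k N h p (Fin.castLE hmN i) = p.1 i := by
  unfold splitEquiv
  dsimp only [Equiv.coe_fn_mk]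
  rw [dif_pos (show ((Fin.castLE hmN i : Fin N) : ℕ) < m from i.isLt)]
  exact congrArg p.1 (Fin.ext rfl)

end Split

/-- The key factorization of the weighted sum over spin configurations. -/
lemma sum_embed_factor (m n : ℕ) (hm : 1 ≤ m) (hmn : m ≤ n) (u : K)
    (X : Matrix (Fin m → Fin 2) (Fin m → Fin 2) K) :
    ∑ s : Fin (n + 1) → Fin 2,
        (∏ j : Fin (n + 1), (if j = Fin.last n then 1 else w0 u (s j))) *
          embed m (n + 1) (Nat.le_succ_of_le hmn) X s s
      = (2 * (u⁻¹ + u) ^ (n - m)) *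
          ∑ t : Fin m → Fin 2, (∏ i, w0 u (t i)) * X t t := by
  classical
  set k := n + 1 - m with hkdef
  have hk : m + k = n + 1 := by omega
  set Φ := splitEquiv m k (n + 1) hk with hΦ
  set ψ := idxEquiv m k (n + 1) hk with hψ
  rw [← Equiv.sum_comp Φ, Fintype.sum_prod_type]
  have key : ∀ (t : Fin m → Fin 2) (r : Fin k → Fin 2),
      (∏ j : Fin (n + 1), (if j = Fin.last n then 1 else w0 u (Φ (t, r) j))) *
          embed m (n + 1) (Nat.le_succ_of_le hmn) X (Φ (t, r)) (Φ (t, r))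
        = ((∏ i, w0 u (t i)) * X t t) *
            ∏ j : Fin k, (if m + (j : ℕ) = n then 1 else w0 u (r j)) := by
    intro t r
    have hembed : embed m (n + 1) (Nat.le_succ_of_le hmn) X (Φ (t, r)) (Φ (t, r)) = X t t := by
      unfold embed
      rw [Matrix.of_apply, if_pos (fun _ _ => rfl)]
      congr 1
      all_goals
        funext i
        exact splitEquiv_castLE m k (n + 1) hk (t, r) (Nat.le_succ_of_le hmn) i
    have hprod : (∏ j : Fin (n + 1), (if j = Fin.last n then 1 else w0 u (Φ (t, r) j)))
        = (∏ i, w0 u (t i)) * ∏ j : Fin k, (if m + (j : ℕ) = n then 1 else w0 u (r j)) := by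
      rw [← Equiv.prod_comp ψ, Fintype.prod_sum_type]
      congr 1
      · apply Finset.prod_congr rfl
        intro i _
        have hne : ψ (Sum.inl i) ≠ Fin.last n := by
          intro hcon
          have hval := congrArg Fin.val hcon
          have hlt := i.isLt
          simp only [hψ, idxEquiv, Equiv.coe_fn_mk, Fin.val_last] at hval
          omega
        rw [if_neg hne]
        rw [show (ψ (Sum.inl i)) = idxEquiv m k (n + 1) hk (Sum.inl i) from rfl]
        rw [splitEquiv_inl m k (n + 1) hk (t, r) i]
      · apply Finset.prod_congr rfl
        intro j _
        have hcond : ((ψ (Sum.inr j) : Fin (n + 1)) = Fin.last n) ↔ (m + (j : ℕ) = n) := by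
          rw [Fin.ext_iff]
          simp [hψ, idxEquiv]
        have happ : Φ (t, r) (ψ (Sum.inr j)) = r j :=
          splitEquiv_inr m k (n + 1) hk (t, r) j
        rw [happ]
        by_cases hc : m + (j : ℕ) = n
        · rw [if_pos (hcond.mpr hc), if_pos hc]
        · rw [if_neg (fun hh => hc (hcond.mp hh)), if_neg hc]
    rw [hembed, hprod]
    ring
  calc ∑ t : Fin m → Fin 2, ∑ r : Fin k → Fin 2,
        (∏ j : Fin (n + 1), (if j = Fin.last n then 1 else w0 u (Φ (t, r) j))) *
          embed m (n + 1) (Nat.le_succ_of_le hmn) X (Φ (t, r)) (Φ (t, r))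
      = ∑ t : Fin m → Fin 2, ∑ r : Fin k → Fin 2,
          ((∏ i, w0 u (t i)) * X t t) *
            ∏ j : Fin k, (if m + (j : ℕ) = n then 1 else w0 u (r j)) :=
        Finset.sum_congr rfl fun t _ => Finset.sum_congr rfl fun r _ => key t r
    _ = (∑ t : Fin m → Fin 2, (∏ i, w0 u (t i)) * X t t) *
          (∑ r : Fin k → Fin 2, ∏ j : Fin k, (if m + (j : ℕ) = n then 1 else w0 u (r j))) := by
        rw [Finset.sum_mul_sum]
    _ = (2 * (u⁻¹ + u) ^ (n - m)) * ∑ t : Fin m → Fin 2, (∏ i, w0 u (t i)) * X t t := by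
        rw [mul_comm]
        congr 1
        rw [show (∑ r : Fin k → Fin 2, ∏ j : Fin k,
            (if m + (j : ℕ) = n then (1 : K) else w0 u (r j)))
          = ∏ j : Fin k, ∑ d : Fin 2, (if m + (j : ℕ) = n then (1 : K) else w0 u d) from
          (Fintype.prod_sum (fun (j : Fin k) (d : Fin 2) => if m + (j : ℕ) = n then (1 : K) else w0 u d)).symm]
        have hinner : ∀ j : Fin k, (∑ d : Fin 2, if m + (j : ℕ) = n then (1 : K) else w0 u d)
            = if m + (j : ℕ) = n then 2 else u⁻¹ + u := by
          intro j
          by_cases hc : m + (j : ℕ) = n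
          · simp only [if_pos hc]
            rw [Fin.sum_univ_two]
            norm_num
          · simp only [if_neg hc]
            rw [Fin.sum_univ_two]
            simp [w0]
        rw [Finset.prod_congr rfl fun j _ => hinner j]
        have hk1 : 1 ≤ k := by omega
        have hj0lt : k - 1 < k := by omega
        set j0 : Fin k := ⟨k - 1, hj0lt⟩ with hj0
        rw [← Finset.mul_prod_erase Finset.univ _ (Finset.mem_univ j0)]
        have h1 : (if m + (j0 : ℕ) = n then (2 : K) else u⁻¹ + u) = 2 := by
          rw [if_pos]
          simp only [hj0]
          omega
        rw [h1]
        congr 1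
        have h2 : ∀ j ∈ Finset.univ.erase j0,
            (if m + (j : ℕ) = n then (2 : K) else u⁻¹ + u) = u⁻¹ + u := by
          intro j hj
          rw [if_neg]
          intro hcon
          exact (Finset.mem_erase.mp hj).1 (Fin.ext (by simp only [hj0]; omega))
        rw [Finset.prod_congr rfl h2, Finset.prod_const,
          Finset.card_erase_of_mem (Finset.mem_univ j0), Finset.card_univ]
        congr 1
        simp only [Fintype.card_fin]
        omega

/-- The diagonal weight on the big space (no auxiliary weight). -/
def dEx (N : ℕ) (u : K) : (Fin 2 × (Fin N → Fin 2)) → K := fun x => ∏ j, w0 u (x.2 j)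

/-- The diagonal weight with auxiliary weight, omitting site `ℓ`. -/
def dG (N : ℕ) (u : K) (ℓ : Fin N) : (Fin 2 × (Fin N → Fin 2)) → K :=
  fun x => w0 u x.1 * ∏ j ∈ Finset.univ.erase ℓ, w0 u (x.2 j)

lemma dEx_sigma (N : ℕ) (u : K) (x : Fin 2 × (Fin (N + 1) → Fin 2)) :
    dEx (N + 1) u (sigmaSwap N x) = dG (N + 1) u (Fin.last N) x := by
  obtain ⟨a, s⟩ := x
  unfold dEx dG sigmaSwap
  dsimp only
  rw [← Finset.mul_prod_erase Finset.univ _ (Finset.mem_univ (Fin.last N))]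
  congr 1
  · rw [Function.update_self]
  · exact Finset.prod_congr rfl fun j hj => by
      rw [Function.update_of_ne (Finset.mem_erase.mp hj).1]

lemma trace_ptr (N : ℕ) (u : K)
    (M : Matrix (Fin 2 × (Fin N → Fin 2)) (Fin 2 × (Fin N → Fin 2)) K) :
    Matrix.trace (Matrix.diagonal
        (fun s : Fin N → Fin 2 => ∏ i, (if s i = 0 then u⁻¹ else u)) * ptr N M)
      = ∑ x : Fin 2 × (Fin N → Fin 2), dEx N u x * M x x := by
  rw [trace_diag_mul]
  simp only [ptr, Matrix.of_apply, Finset.mul_sum]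
  rw [Finset.sum_comm, Fintype.sum_prod_type]
  rfl

lemma sum_sigma (N : ℕ) (u : K)
    (M : Matrix (Fin 2 × (Fin (N + 1) → Fin 2)) (Fin 2 × (Fin (N + 1) → Fin 2)) K) :
    ∑ x, dEx (N + 1) u x * M (sigmaSwap N x) (sigmaSwap N x)
      = ∑ x, dG (N + 1) u (Fin.last N) x * M x x := by
  apply Fintype.sum_bijective (sigmaSwap N) (sigmaSwap_invol N).bijective
  intro x
  rw [← dEx_sigma N u (sigmaSwap N x), sigmaSwap_invol]

lemma sum_dG_auxTwist (N : ℕ) (u w : K)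
    (Y : Matrix (Fin (N + 1) → Fin 2) (Fin (N + 1) → Fin 2) K) :
    ∑ x, dG (N + 1) u (Fin.last N) x * auxTwist (N + 1) w Y x x
      = (u⁻¹ * w + u * w⁻¹) *
          ∑ s : Fin (N + 1) → Fin 2,
            (∏ j ∈ Finset.univ.erase (Fin.last N), w0 u (s j)) * Y s s := by
  rw [Fintype.sum_prod_type]
  unfold dG auxTwist
  simp only [Matrix.of_apply, eq_self_iff_true, if_true]
  have hstep : ∀ ε : Fin 2,
      (∑ s : Fin (N + 1) → Fin 2,
          (w0 u ε * ∏ j ∈ Finset.univ.erase (Fin.last N), w0 u (s j)) *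
            ((if ε = 0 then w else w⁻¹) * Y s s))
        = (w0 u ε * (if ε = 0 then w else w⁻¹)) *
            ∑ s : Fin (N + 1) → Fin 2,
              (∏ j ∈ Finset.univ.erase (Fin.last N), w0 u (s j)) * Y s s := by
    intro ε
    rw [Finset.mul_sum]
    exact Finset.sum_congr rfl fun s _ => by ring
  rw [Finset.sum_congr rfl fun ε _ => hstep ε, Fin.sum_univ_two]
  have h0 : w0 u (0 : Fin 2) = u⁻¹ := if_pos rfl
  have h1 : w0 u (1 : Fin 2) = u := if_neg (by decide)
  rw [h0, h1, if_pos rfl, if_neg (by decide)]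
  ring

lemma prod_erase_ite (N : ℕ) (u : K) (ℓ : Fin N) (s : Fin N → Fin 2) :
    ∏ j ∈ Finset.univ.erase ℓ, w0 u (s j)
      = ∏ j : Fin N, (if j = ℓ then 1 else w0 u (s j)) := by
  rw [← Finset.prod_erase (f := fun j => if j = ℓ then (1 : K) else w0 u (s j)) (a := ℓ)
    Finset.univ (if_pos rfl)]
  exact Finset.prod_congr rfl fun j hj => (if_neg (Finset.mem_erase.mp hj).1).symm

lemma wtr_eq (N : ℕ) (u : K) (Y : Matrix (Fin N → Fin 2) (Fin N → Fin 2) K) :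
    wtr N u Y = (∑ s : Fin N → Fin 2, (∏ i, w0 u (s i)) * Y s s) / (u + u⁻¹) ^ N := by
  unfold wtr
  rw [trace_diag_mul]
  rfl

end TTMAux

/-- Weighted trace of the twisted transfer matrix evaluated at the last inhomogeneity:
`tr^κ_n( 𝐭*(ξ_n)(X ⊗ id) ) = 2·(w + u²·w⁻¹)/(1 + u²) · tr^κ_m(X)`. Here the chain has
`n+1` sites, `X` acts on the first `m` sites with `1 ≤ m < n+1`. -/
theorem ttm_weighted_trace {K : Type*} [Field K] (n m : ℕ) (hm : 1 ≤ m) (hmn : m ≤ n)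
    (q w u : K) (hq : q ≠ 0) (hq2 : q ^ 2 ≠ 1) (hw : w ≠ 0)
    (hu : u ≠ 0) (hu2 : 1 + u ^ 2 ≠ 0)
    (ξ : Fin (n + 1) → K) (hξ : ∀ i, ξ i ≠ 0)
    (hr : ∀ i, i ≠ Fin.last n →
      (ξ (Fin.last n) / ξ i) ^ 2 ≠ q ^ 2 ∧ (ξ (Fin.last n) / ξ i) ^ 2 ≠ (q ^ 2)⁻¹)
    (X : Matrix (Fin m → Fin 2) (Fin m → Fin 2) K) :
    wtr (n + 1) u
        (ttm (n + 1) q (ξ (Fin.last n)) w ξ (embed m (n + 1) (Nat.le_succ_of_le hmn) X))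
      = 2 * (w + u ^ 2 * w⁻¹) / (1 + u ^ 2) * wtr m u X := by
  classical
  have hv : u + u⁻¹ ≠ 0 := by
    intro h
    apply hu2
    have h1 : u * (u + u⁻¹) = 1 + u ^ 2 := by field_simp; ring
    rw [h, mul_zero] at h1
    exact h1.symm
  -- the reduced monodromy matrix
  set T' : Matrix (Fin 2 × (Fin (n + 1) → Fin 2)) (Fin 2 × (Fin (n + 1) → Fin 2)) K :=
    (((List.finRange n).reverse).map
      (fun i => Laux (n + 1) q (ξ (Fin.last n) / ξ i.castSucc) i.castSucc)).prod with hT'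
  have hmono : mono (n + 1) q (ξ (Fin.last n)) ξ = TTMAux.Pmat n * T' := by
    rw [TTMAux.mono_succ, div_self (hξ (Fin.last n)), TTMAux.laux_last_eq_Pmat hq hq2, hT']
  have hPinv : (TTMAux.Pmat n : Matrix _ _ K)⁻¹ = TTMAux.Pmat n :=
    Matrix.inv_eq_right_inv TTMAux.Pmat_mul_Pmat
  have hT'unit : IsUnit T' := by
    rw [hT']
    apply List.prod_isUnit
    intro x hx
    rw [List.mem_map] at hx
    obtain ⟨i, -, rfl⟩ := hx
    have hne : (Fin.castSucc i) ≠ Fin.last n := (Fin.castSucc_lt_last i).ne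
    exact TTMAux.isUnit_Laux _ q _ _ hq (div_ne_zero (hξ _) (hξ _))
      (hr i.castSucc hne).1 (hr i.castSucc hne).2
  have hcommT' : Matrix.diagonal (TTMAux.dG (n + 1) u (Fin.last n)) * T'
      = T' * Matrix.diagonal (TTMAux.dG (n + 1) u (Fin.last n)) := by
    have hall : ∀ x ∈ ((List.finRange n).reverse).map
        (fun i => Laux (n + 1) q (ξ (Fin.last n) / ξ i.castSucc) i.castSucc),
        Commute (Matrix.diagonal (TTMAux.dG (n + 1) u (Fin.last n))) x := by
      intro x hx
      rw [List.mem_map] at hx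
      obtain ⟨i, -, rfl⟩ := hx
      have hne : (Fin.castSucc i) ≠ Fin.last n := (Fin.castSucc_lt_last i).ne
      exact TTMAux.twist_comm_Laux (n + 1) u q _ (Fin.last n) i.castSucc hne
    rw [hT']
    exact (Commute.list_prod_right _ _ hall).eq
  set Xe := embed m (n + 1) (Nat.le_succ_of_le hmn) X with hXe
  unfold ttm wtr
  rw [hmono, Matrix.mul_inv_rev, hPinv]
  have hassoc : TTMAux.Pmat n * T' * auxTwist (n + 1) w Xe * (T'⁻¹ * TTMAux.Pmat n)
      = TTMAux.Pmat n * (T' * auxTwist (n + 1) w Xe * T'⁻¹) * TTMAux.Pmat n := by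
    simp only [Matrix.mul_assoc]
  rw [hassoc, TTMAux.trace_ptr, TTMAux.Pmat_conj]
  simp only [Matrix.of_apply]
  rw [TTMAux.sum_sigma]
  rw [show (∑ x, TTMAux.dG (n + 1) u (Fin.last n) x *
      (T' * auxTwist (n + 1) w Xe * T'⁻¹) x x)
    = Matrix.trace (Matrix.diagonal (TTMAux.dG (n + 1) u (Fin.last n)) *
      (T' * auxTwist (n + 1) w Xe * T'⁻¹)) from (TTMAux.trace_diag_mul _ _).symm]
  rw [TTMAux.trace_conj _ _ _ hT'unit hcommT', TTMAux.trace_diag_mul]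
  rw [show (∑ x, TTMAux.dG (n + 1) u (Fin.last n) x * auxTwist (n + 1) w Xe x x)
    = ∑ x : Fin 2 × (Fin (n + 1) → Fin 2),
        TTMAux.dG (n + 1) u (Fin.last n) x * auxTwist (n + 1) w Xe x x from rfl]
  rw [TTMAux.sum_dG_auxTwist]
  have hsum : (∑ s : Fin (n + 1) → Fin 2,
      (∏ j ∈ Finset.univ.erase (Fin.last n), TTMAux.w0 u (s j)) * Xe s s)
      = (2 * (u⁻¹ + u) ^ (n - m)) *
          ∑ t : Fin m → Fin 2, (∏ i, TTMAux.w0 u (t i)) * X t t := by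
    rw [Finset.sum_congr rfl fun s _ => by rw [TTMAux.prod_erase_ite (n + 1) u (Fin.last n) s]]
    rw [hXe]
    exact TTMAux.sum_embed_factor m n hm hmn u X
  rw [hsum, TTMAux.trace_diag_mul]
  simp only [TTMAux.w0]
  have hpow : (u + u⁻¹) ^ (n + 1) = (u + u⁻¹) ^ (n - m) * ((u + u⁻¹) ^ m * (u + u⁻¹)) := by
    rw [← pow_succ, ← pow_add]
    congr 1
    omega
  rw [show u⁻¹ + u = u + u⁻¹ from add_comm _ _, hpow]
  have hc : (u + u⁻¹) ^ (n - m) ≠ 0 := pow_ne_zero _ hv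
  have hB : (u + u⁻¹) ^ m ≠ 0 := pow_ne_zero _ hv
  obtain ⟨A, hA⟩ : ∃ A, (u + u⁻¹) ^ (n - m) = A := ⟨_, rfl⟩
  obtain ⟨B, hBe⟩ : ∃ B, (u + u⁻¹) ^ m = B := ⟨_, rfl⟩
  rw [hA] at hc ⊢
  rw [hBe] at hB ⊢
  rw [div_mul_div_comm,
    div_eq_div_iff (mul_ne_zero hc (mul_ne_zero hB hv)) (mul_ne_zero hu2 hB)]
  field_simp
  ring
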